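/- (DCBO with restart.) Let f : ℝ^d → ℝ ∪ {+∞} be Borel measurable and ρ_in a Borel probability measure on ℝ^d with supp(ρ_in) ⊂ S. Suppose (p^m)_{m≥1} is a random sequence in S and, for each round m, (x_0^{i,m})_{i=2,…,N} are fresh samples, i.i.d. with law ρ_in and independent across rounds, such that f(p^{m+1}) ≤ min{ f(p^m), f(x_0^{2,m}), …, f(x_0^{N,m}) } almost surely for every m (this is guaranteed by running one round of DCBO started from (p^m, x_0^{2,m}, …, x_0^{N,m}) and using the monotonicity of the best value). Then almost surely the sequence f(p^m) is monotone decreasing and lim_{m→∞} f(p^m) ≤ f*_{ρ_in}, where f*_{ρ_in} := ess inf of f with respect to ρ_in. If moreover f is continuous on S, f attains its global minimum, and supp(ρ_in) = S, then lim_{m→∞} f(p^m) = min f almost surely. -/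

import Mathlib

open MeasureTheory ProbabilityTheory Filter Topology

noncomputable section

/-- `Euc d` is the `d`-dimensional Euclidean space `ℝ^d`. -/
abbrev Euc (d : ℕ) := EuclideanSpace ℝ (Fin d)

/-- DCBO with restart: Let `(p^m)` be the sequence of best points produced
by repeated rounds of DCBO, where each round `m` uses fresh i.i.d. samples
`x_0^{2,m}, …, x_0^{N,m}` of law `ρ_in` (independent across rounds) together with the
previous best point `p^m`, so that
`f(p^{m+1}) ≤ min{f(p^m), f(x_0^{2,m}), …, f(x_0^{N,m})}` almost surely.  Then, almost
surely, `f(p^m)` is monotone decreasing and `lim_m f(p^m) ≤ f*_{ρ_in}` (the essential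
infimum of `f` w.r.t. `ρ_in`).  If moreover `f` is continuous on `S`, attains its global
minimum, and `supp(ρ_in) = S`, then `lim_m f(p^m) = min f` almost surely. -/
theorem dcbo_with_restart
    {Ω : Type*} [MeasurableSpace Ω] (P : Measure Ω) [IsProbabilityMeasure P]
    {d N : ℕ} (hd : 1 ≤ d) (hN : 2 ≤ N)
    (f : Euc d → EReal) (hf : Measurable f)
    (S : Set (Euc d)) (hS : S = {y | f y < ⊤}) (hSne : S.Nonempty) (hScl : IsClosed S)
    (ρin : Measure (Euc d)) [IsProbabilityMeasure ρin] (hρS : ρin Sᶜ = 0)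
    -- fresh samples for each round, i.i.d. with law `ρ_in` and independent across rounds
    (y : ℕ → Fin (N - 1) → Ω → Euc d)
    (hymeas : ∀ m i, Measurable (y m i))
    (hydist : ∀ m i, Measure.map (y m i) P = ρin)
    (hyindep : iIndepFun
      (fun (q : ℕ × Fin (N - 1)) ω => y q.1 q.2 ω) P)
    -- the random sequence of best points, lying in `S`
    (pseq : ℕ → Ω → Euc d) (hpS : ∀ m ω, pseq m ω ∈ S)
    -- each round of DCBO can only improve on the best of its initial positions
    (hround : ∀ m, ∀ᵐ ω ∂P, f (pseq (m + 1) ω) ≤ f (pseq m ω) ∧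
      ∀ i : Fin (N - 1), f (pseq (m + 1) ω) ≤ f (y m i ω)) :
    (∀ᵐ ω ∂P, (∀ m, f (pseq (m + 1) ω) ≤ f (pseq m ω)) ∧
      ∃ L : EReal, Tendsto (fun m => f (pseq m ω)) atTop (nhds L) ∧ L ≤ essInf f ρin) ∧
    (∀ xstar : Euc d, ContinuousOn f S → (∀ z, f xstar ≤ f z) →
      (∀ w ∈ S, ∀ U : Set (Euc d), IsOpen U → w ∈ U → 0 < ρin U) →
      ∀ᵐ ω ∂P, Tendsto (fun m => f (pseq m ω)) atTop (nhds (f xstar))) := by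
  have hN1 : 0 < N - 1 := by omega
  set i0 : Fin (N - 1) := ⟨0, hN1⟩ with hi0
  -- Borel–Cantelli step
  have key : ∀ c : EReal, essInf f ρin < c →
      ∀ᵐ ω ∂P, ∃ᶠ m in atTop, f (y m i0 ω) < c := by
    intro c hc
    set A : Set (Euc d) := {x | f x < c} with hA
    have hAmeas : MeasurableSet A := hf measurableSet_Iio
    have hδ : ρin A ≠ 0 := by
      intro h0
      have : c ≤ essInf f ρin := by
        rw [essInf_eq_sSup]
        exact le_sSup h0
      exact absurd hc (not_lt.2 this)
    set s : ℕ → Set Ω := fun m => y m i0 ⁻¹' A with hs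
    have hsmeas : ∀ m, MeasurableSet (s m) := fun m => (hymeas m i0) hAmeas
    have hsP : ∀ m, P (s m) = ρin A := fun m => by
      rw [← hydist m i0, Measure.map_apply (hymeas m i0) hAmeas]
    have hindep : iIndepSet s P := by
      rw [iIndepSet_iff_meas_biInter hsmeas]
      intro t
      have hinj : Set.InjOn (fun m => (m, i0)) (t : Set ℕ) :=
        fun a _ b _ h => (Prod.mk.injEq _ _ _ _ ▸ h).1
      have h1 : (⋂ m ∈ t, s m) = ⋂ q ∈ t.image (fun m => (m, i0)),
          (fun ω => y q.1 q.2 ω) ⁻¹' A := by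
        ext ω; simp [s, Finset.mem_image]
      have h2 := hyindep.meas_biInter (S := t.image (fun m => (m, i0)))
        (s := fun q => (fun ω => y q.1 q.2 ω) ⁻¹' A)
        (fun q _ => ⟨A, hAmeas, rfl⟩)
      rw [h1, h2, Finset.prod_image hinj]
    have htop : (∑' m, P (s m)) = (⊤ : ENNReal) := by
      simp only [hsP]
      exact ENNReal.tsum_const_eq_top_of_ne_zero hδ
    have h1 := measure_limsup_eq_one hsmeas hindep htop
    have hmeas : MeasurableSet (limsup s atTop) := .measurableSet_limsup hsmeas
    have : ∀ᵐ ω ∂P, ω ∈ limsup s atTop := by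
      rw [ae_iff]
      have := measure_compl hmeas (measure_ne_top P _)
      simp only [h1, measure_univ] at this
      change P (limsup s atTop)ᶜ = 0
      simpa [Set.compl_setOf] using this
    filter_upwards [this] with ω hω
    exact (mem_limsup_iff_frequently_mem (s := s) (𝓕 := atTop) (a := ω)).1 hω
  -- rational approximations
  have hq : ∀ᵐ ω ∂P, ∀ q : ℚ, essInf f ρin < ((q : ℝ) : EReal) →
      ∃ᶠ m in atTop, f (y m i0 ω) < ((q : ℝ) : EReal) := by
    rw [ae_all_iff]
    intro q
    by_cases h : essInf f ρin < ((q : ℝ) : EReal)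
    · filter_upwards [key _ h] with ω hω _ using hω
    · exact ae_of_all _ fun ω hc => absurd hc h
  have hmono : ∀ᵐ ω ∂P, ∀ m, f (pseq (m + 1) ω) ≤ f (pseq m ω) ∧
      ∀ i : Fin (N - 1), f (pseq (m + 1) ω) ≤ f (y m i ω) := ae_all_iff.2 hround
  -- Part 1
  have H1 : ∀ᵐ ω ∂P, (∀ m, f (pseq (m + 1) ω) ≤ f (pseq m ω)) ∧
      ∃ L : EReal, Tendsto (fun m => f (pseq m ω)) atTop (nhds L) ∧ L ≤ essInf f ρin := by
    filter_upwards [hmono, hq] with ω h1 h2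
    refine ⟨fun m => (h1 m).1, ⨅ m, f (pseq m ω), ?_, ?_⟩
    · exact tendsto_atTop_iInf (antitone_nat_of_succ_le fun m => (h1 m).1)
    · by_contra hlt
      push_neg at hlt
      obtain ⟨q, hq1, hq2⟩ := EReal.exists_rat_btwn_of_lt hlt
      obtain ⟨m, hm⟩ := (h2 q hq1).exists
      have : (⨅ m, f (pseq m ω)) ≤ f (pseq (m + 1) ω) := iInf_le _ _
      exact absurd (this.trans_lt (((h1 m).2 i0).trans_lt hm)) (not_lt.2 hq2.le)
  refine ⟨H1, ?_⟩
  -- Part 2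
  intro xstar hcont hmin hsupp
  have hxS : xstar ∈ S := by
    obtain ⟨z, hz⟩ := hSne
    rw [hS] at hz ⊢
    exact (hmin z).trans_lt hz
  have hessle : essInf f ρin ≤ f xstar := by
    by_contra h
    push_neg at h
    obtain ⟨q, hq1, hq2⟩ := EReal.exists_rat_btwn_of_lt h
    -- positive mass near xstar where f < q
    have hct : ContinuousWithinAt f S xstar := hcont xstar hxS
    have hnhds : f ⁻¹' Set.Iio ((q : ℝ) : EReal) ∈ 𝓝[S] xstar :=
      hct (Iio_mem_nhds hq1)
    obtain ⟨U, hUopen, hxU, hUsub⟩ := mem_nhdsWithin.1 hnhds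
    have hUpos : 0 < ρin U := hsupp xstar hxS U hUopen hxU
    have hUS : 0 < ρin (U ∩ S) := by
      by_contra hz
      push_neg at hz
      have hz0 : ρin (U ∩ S) = 0 := le_antisymm hz bot_le
      have : ρin U ≤ ρin (U ∩ S) + ρin Sᶜ :=
        (measure_mono (fun x hx => by
          by_cases hxs : x ∈ S
          · exact Set.mem_union_left _ ⟨hx, hxs⟩
          · exact Set.mem_union_right _ hxs)).trans (measure_union_le _ _)
      rw [hz0, hρS, add_zero] at this
      exact absurd (le_antisymm this bot_le ▸ hUpos) (by simp [le_antisymm this bot_le])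
    have hsub : U ∩ S ⊆ {x | f x < ((q : ℝ) : EReal)} := fun x hx => hUsub ⟨hx.1, hx.2⟩
    have hpos : 0 < ρin {x | f x < ((q : ℝ) : EReal)} := hUS.trans_le (measure_mono hsub)
    have hae : ∀ᵐ x ∂ρin, ((q : ℝ) : EReal) < f x := ae_lt_of_lt_essInf hq2
    have : ρin {x | f x < ((q : ℝ) : EReal)} = 0 := by
      rw [ae_iff] at hae
      refine le_antisymm (le_trans (measure_mono ?_) hae.le) bot_le
      exact fun x hx => not_lt.2 hx.le
    exact absurd (this ▸ hpos) (by simp [this])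
  filter_upwards [H1] with ω ⟨hmo, L, hL, hLle⟩
  have hlow : f xstar ≤ L := ge_of_tendsto' hL fun m => hmin _
  have : L = f xstar := le_antisymm (hLle.trans hessle) hlow
  rwa [this] at hL
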